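/- arXiv:0810.4224 — 2 statements merged into one kernel-verified Lean document; each statement's English description precedes it below -/
import Mathlib

section
/- Let $L/K$ be a finite Galois extension of fields with group $G$, let $I$ be an abelian group equipped with a surjective homomorphism onto $G$ (write $\mathfrak{a} \mapsto \sigma_\mathfrak{a}$), and let $\lambda, \lambda' \colon I \to L^*$ be two one-cocycles (i.e., $\lambda(\mathfrak{a}\mathfrak{b}) = \lambda(\mathfrak{a}) \cdot \sigma_\mathfrak{a}(\lambda(\mathfrak{b}))$ for all $\mathfrak{a},\mathfrak{b}$) that agree on the kernel of $I \to G$. Then $\lambda$ and $\lambda'$ are cohomologous: there exists $u \in L^*$ with $\lambda'(\mathfrak{a}) = \lambda(\mathfrak{a}) \cdot \sigma_\mathfrak{a}(u)/u$ for all $\mathfrak{a} \in I$. -/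
/-- two one-cocycles on an abelian group `I` acting on `L` through a
surjection onto `Gal(L/K)` that agree on the kernel of the surjection are cohomologous
(Hilbert 90). -/
theorem cocycles_agreeing_on_kernel_cohomologous
    (K L : Type*) [Field K] [Field L] [Algebra K L] [IsGalois K L] [FiniteDimensional K L]
    (I : Type*) [CommGroup I] (π : I →* (L ≃ₐ[K] L)) (hπ : Function.Surjective π)
    (lam lam' : I → Lˣ)
    (hlam : ∀ a b : I, (lam (a * b) : L) = (lam a : L) * π a (lam b : L))
    (hlam' : ∀ a b : I, (lam' (a * b) : L) = (lam' a : L) * π a (lam' b : L))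
    (hagree : ∀ a : I, π a = 1 → lam a = lam' a) :
    ∃ u : Lˣ, ∀ a : I, (lam' a : L) = (lam a : L) * (π a (u : L) / (u : L)) := by
  classical
  set μ : I → Lˣ := fun a => lam' a / lam a with hμ
  have hμcocycle : ∀ a b : I, (μ (a * b) : L) = (μ a : L) * π a (μ b : L) := by
    intro a b
    have h1 := hlam a b
    have h2 := hlam' a b
    have hla : (lam a : L) ≠ 0 := (lam a).ne_zero
    have hlb : ((π a) (lam b : L)) ≠ 0 := by
      simpa using (lam b).ne_zero
    simp only [hμ, Units.val_div_eq_div_val, h1, h2, map_div₀]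
    field_simp
  have hker : ∀ a : I, π a = 1 → μ a = 1 := by
    intro a ha
    simp [hμ, hagree a ha]
  have hfiber : ∀ a b : I, π a = π b → μ a = μ b := by
    intro a b hab
    have hk : π (a⁻¹ * b) = 1 := by
      rw [map_mul, map_inv, hab]; group
    have : μ (a * (a⁻¹ * b)) = μ a := by
      ext
      rw [hμcocycle, hker _ hk]
      simp
    simpa [mul_inv_cancel_left] using this.symm
  set s : (L ≃ₐ[K] L) → I := Function.surjInv hπ with hs
  have hsec : ∀ g, π (s g) = g := fun g => Function.surjInv_eq hπ g
  set f : (L ≃ₐ[K] L) → Lˣ := fun g => μ (s g) with hf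
  have hfa : ∀ a : I, f (π a) = μ a := fun a => hfiber _ _ (hsec (π a))
  have hfcocycle : groupCohomology.IsMulCocycle₁ f := by
    intro g h
    have : f (g * h) = μ (s g * s h) := by
      apply hfiber
      rw [hsec, map_mul, hsec, hsec]
    rw [this]
    ext
    rw [hμcocycle]
    simp only [AlgEquiv.smul_units_def, Units.val_mul, Units.coe_map, MonoidHom.coe_coe, hsec]
    rw [mul_comm]
  obtain ⟨u, hu⟩ := groupCohomology.isMulCoboundary₁_of_isMulCocycle₁_of_aut_to_units f hfcocycle
  refine ⟨u, fun a => ?_⟩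
  have h1 : (π a) • u / u = μ a := by rw [hu (π a), hfa]
  have h2 : ((π a) • u / u : Lˣ) = (μ a : Lˣ) := h1
  have h3 : ((π a) (u : L)) / (u : L) = (lam' a : L) / (lam a : L) := by
    have := congrArg (Units.val) h2
    simpa [AlgEquiv.smul_units_def, hμ, Units.val_div_eq_div_val] using this
  have hla : (lam a : L) ≠ 0 := (lam a).ne_zero
  have hu0 : (u : L) ≠ 0 := u.ne_zero
  rw [div_eq_div_iff u.ne_zero (lam a).ne_zero] at h3
  rw [mul_div_assoc', eq_div_iff hu0]
  linear_combination -h3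
end

section
/- Let $L/K$ be a finite Galois extension with abelian Galois group $G$ of order $n$, and for each element $\sigma$ of a finite index set $\Phi$ let $\chi_\sigma \colon G \to \mathbb{C}^*$ be a character. Suppose $\lambda \colon G \to L^*$ is a one-cocycle and define, for $\sigma \in \Phi$ and units $u_\mathfrak{a} \in \mathbb{C}^*$, the linear operator $\operatorname{pr}(u) = \sum_{\mathfrak{a} \in G} \big( \sum_{\sigma \in \Phi} \chi_\sigma^{-1}(\mathfrak{a}) \big) c_\mathfrak{a} \cdot \mathfrak{a}^{-1}(u)$ where $c_\mathfrak{a} = \mathfrak{a}^{-1}(\lambda(\mathfrak{a}))$. Then $\operatorname{pr}^2 = n \cdot \operatorname{pr}$ as $K$-linear endomorphisms of $L$, provided the characters $\chi_\sigma$ are pairwise distinct and satisfy $\chi_\sigma(\mathfrak{a}) = \sigma(\psi(\mathfrak{a}))/\psi(\mathfrak{a})$ for a multiplicative splitting $\psi$ of $\lambda$ on the subgroup where $\lambda$ takes values in $K^*$. -/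
/-- Proposition 4.4(i) abstracted: let `L/K` be finite Galois with abelian
Galois group `G` of order `n`, `χ_σ (σ ∈ Φ)` pairwise distinct characters `G → ℂ^*`
whose coefficient sums `S(𝔞) = ∑_σ χ_σ(𝔞)⁻¹` lie in `K` (as follows from
`χ_σ(𝔞) = σ(ψ(𝔞))/ψ(𝔞)` for a multiplicative splitting `ψ` of the one-cocycle `λ`),
and `c_𝔞 = 𝔞⁻¹(λ(𝔞))` for a one-cocycle `λ : G → L^*`. Then the `K`-linear operator
`pr(u) = ∑_{𝔞 ∈ G} S(𝔞) c_𝔞 𝔞⁻¹(u)` on `L` satisfies `pr² = n · pr`. -/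
theorem pr_squared_eq_n_pr (K L : Type*) [Field K] [Field L] [Algebra K L]
    [Algebra K ℂ] [IsGalois K L] [FiniteDimensional K L] [Fintype (L ≃ₐ[K] L)]
    (n : ℕ) (hn : Nat.card (L ≃ₐ[K] L) = n)
    (habelian : ∀ g h : L ≃ₐ[K] L, g * h = h * g)
    (Φ : Type*) [Fintype Φ] (χ : Φ → ((L ≃ₐ[K] L) →* ℂˣ)) (hχ : Function.Injective χ)
    (lam : (L ≃ₐ[K] L) → Lˣ)
    (hlam : ∀ a b : L ≃ₐ[K] L, (lam (a * b) : L) = (lam a : L) * a ((lam b : L)))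
    (S : (L ≃ₐ[K] L) → K)
    (hS : ∀ a : L ≃ₐ[K] L, (∑ σ : Φ, (((χ σ a)⁻¹ : ℂˣ) : ℂ)) = algebraMap K ℂ (S a)) :
    ∀ u : L,
      (∑ a : L ≃ₐ[K] L, algebraMap K L (S a) * (a⁻¹ ((lam a : L)) *
          a⁻¹ (∑ b : L ≃ₐ[K] L, algebraMap K L (S b) * (b⁻¹ ((lam b : L)) * b⁻¹ u))))
        = (n : L) *
          (∑ a : L ≃ₐ[K] L, algebraMap K L (S a) * (a⁻¹ ((lam a : L)) * a⁻¹ u)) := by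
  classical
  intro u
  -- character orthogonality
  have key : ∀ σ τ : Φ, (∑ a : L ≃ₐ[K] L, ((χ τ a : ℂ) * (((χ σ a)⁻¹ : ℂˣ) : ℂ)))
      = if σ = τ then (n : ℂ) else 0 := by
    intro σ τ
    by_cases h : σ = τ
    · subst h
      rw [if_pos rfl]
      have h1 : ∀ a : L ≃ₐ[K] L, (χ σ a : ℂ) * (((χ σ a)⁻¹ : ℂˣ) : ℂ) = 1 := by
        intro a
        rw [← Units.val_mul, mul_inv_cancel, Units.val_one]
      simp only [h1, Finset.sum_const, Finset.card_univ, nsmul_eq_mul, mul_one]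
      rw [← hn, Nat.card_eq_fintype_card]
    · rw [if_neg h]
      have hform : ∀ a : L ≃ₐ[K] L,
          (χ τ a : ℂ) * (((χ σ a)⁻¹ : ℂˣ) : ℂ)
            = ((Units.coeHom ℂ).comp ((χ τ) * (χ σ)⁻¹)) a := by
        intro a
        simp [Units.val_mul]
      simp only [hform]
      apply sum_hom_units_eq_zero
      intro hcon
      apply h
      apply hχ
      have h1 : (χ τ) * (χ σ)⁻¹ = 1 := by
        ext g
        have := congrArg (fun f => f g) hcon
        simpa [Units.ext_iff] using this
      have h2 : χ τ = χ σ := mul_inv_eq_one.mp h1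
      exact h2.symm
  have horth : ∀ c : L ≃ₐ[K] L, ∑ a : L ≃ₐ[K] L, S a * S (a⁻¹ * c) = (n : K) * S c := by
    intro c
    apply (algebraMap K ℂ).injective
    rw [map_sum, map_mul, map_natCast, ← hS c]
    have expand : ∀ a : L ≃ₐ[K] L, algebraMap K ℂ (S a * S (a⁻¹ * c))
        = ∑ σ : Φ, ∑ τ : Φ, (((χ σ a)⁻¹ : ℂˣ) : ℂ) * (((χ τ (a⁻¹ * c))⁻¹ : ℂˣ) : ℂ) := by
      intro a
      rw [map_mul, ← hS, ← hS, Finset.sum_mul_sum]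
    simp only [expand]
    rw [Finset.sum_comm]
    have inner : ∀ σ : Φ, (∑ a : L ≃ₐ[K] L, ∑ τ : Φ,
        (((χ σ a)⁻¹ : ℂˣ) : ℂ) * (((χ τ (a⁻¹ * c))⁻¹ : ℂˣ) : ℂ))
        = (n : ℂ) * (((χ σ c)⁻¹ : ℂˣ) : ℂ) := by
      intro σ
      rw [Finset.sum_comm]
      have hin : ∀ τ : Φ, (∑ a : L ≃ₐ[K] L,
          (((χ σ a)⁻¹ : ℂˣ) : ℂ) * (((χ τ (a⁻¹ * c))⁻¹ : ℂˣ) : ℂ))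
          = (if σ = τ then (n : ℂ) else 0) * (((χ τ c)⁻¹ : ℂˣ) : ℂ) := by
        intro τ
        rw [← key σ τ, Finset.sum_mul]
        refine Finset.sum_congr rfl fun a _ => ?_
        have hu : ((χ τ (a⁻¹ * c))⁻¹ : ℂˣ) = χ τ a * (χ τ c)⁻¹ := by
          rw [map_mul, map_inv, mul_inv, inv_inv]
        rw [hu, Units.val_mul]
        ring
      simp only [hin, ite_mul, zero_mul, Finset.sum_ite_eq, Finset.mem_univ, if_pos]
    simp only [inner]
    rw [← Finset.mul_sum]
  -- the cocycle relation on the coefficients c_a = a⁻¹(lam a)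
  have hc : ∀ a b : L ≃ₐ[K] L,
      a⁻¹ ((lam a : L)) * a⁻¹ (b⁻¹ ((lam b : L))) = (a * b)⁻¹ ((lam (a * b) : L)) := by
    intro a b
    rw [habelian a b, hlam b a, map_mul, mul_inv_rev]
    have e1 : (a⁻¹ * b⁻¹) ((lam b : L)) = a⁻¹ (b⁻¹ ((lam b : L))) := rfl
    have e2 : (a⁻¹ * b⁻¹) (b ((lam a : L))) = a⁻¹ ((lam a : L)) := by
      have : b⁻¹ (b ((lam a : L))) = (lam a : L) :=
        AlgEquiv.symm_apply_apply b ((lam a : L))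
      show a⁻¹ (b⁻¹ (b ((lam a : L)))) = _
      rw [this]
    rw [e1, e2, mul_comm]
  -- expand the inner application of a⁻¹
  have expandL : ∀ a : L ≃ₐ[K] L,
      algebraMap K L (S a) * (a⁻¹ ((lam a : L)) *
        a⁻¹ (∑ b : L ≃ₐ[K] L, algebraMap K L (S b) * (b⁻¹ ((lam b : L)) * b⁻¹ u)))
      = ∑ b : L ≃ₐ[K] L, algebraMap K L (S a * S b) *
          ((a * b)⁻¹ ((lam (a * b) : L)) * (a * b)⁻¹ u) := by
    intro a
    rw [map_sum, Finset.mul_sum, Finset.mul_sum]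
    refine Finset.sum_congr rfl fun b _ => ?_
    rw [map_mul, map_mul, AlgEquiv.commutes, map_mul]
    have e3 : (a * b)⁻¹ u = a⁻¹ (b⁻¹ u) := by
      rw [mul_inv_rev, habelian b⁻¹ a⁻¹]; rfl
    rw [e3, ← hc a b]
    ring
  simp only [expandL]
  -- reindex b ↦ a * b
  have reidx : ∀ a : L ≃ₐ[K] L,
      (∑ b : L ≃ₐ[K] L, algebraMap K L (S a * S b) *
          ((a * b)⁻¹ ((lam (a * b) : L)) * (a * b)⁻¹ u))
      = ∑ c : L ≃ₐ[K] L, algebraMap K L (S a * S (a⁻¹ * c)) *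
          (c⁻¹ ((lam c : L)) * c⁻¹ u) := by
    intro a
    refine Fintype.sum_equiv (Equiv.mulLeft a) _ _ fun c => ?_
    simp [mul_inv_cancel_left]
  simp only [reidx]
  rw [Finset.sum_comm]
  rw [Finset.mul_sum]
  refine Finset.sum_congr rfl fun c _ => ?_
  rw [← Finset.sum_mul, ← map_sum, horth c, map_mul, map_natCast]
  ring
end
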